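/- If f is the CDF of N(0, σ²), then -σ²·log(1 - f(x)) is asymptotic to x²/2 as x → ∞; that is, lim_{x→∞} (-σ²·log(1 - f(x)))/(x²/2) = 1. -/

import Mathlib

open Real Filter MeasureTheory Set

noncomputable def stdNormalPDF (t : ℝ) : ℝ := (Real.sqrt (2 * Real.pi))⁻¹ * Real.exp (-t ^ 2 / 2)

noncomputable def stdNormalCDF (x : ℝ) : ℝ := ∫ t in Set.Iic x, stdNormalPDF t

lemma pdf_eq : stdNormalPDF = fun t => (Real.sqrt (2 * π))⁻¹ * Real.exp (-(1/2) * t ^ 2) := by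
  funext t; unfold stdNormalPDF; ring_nf

lemma pdf_integrable : Integrable stdNormalPDF := by
  rw [pdf_eq]
  exact (integrable_exp_neg_mul_sq (by norm_num)).const_mul _

lemma pdf_total : ∫ t, stdNormalPDF t = 1 := by
  rw [pdf_eq, MeasureTheory.integral_const_mul, integral_gaussian,
    show π / (1/2) = 2 * π by ring,
    inv_mul_cancel₀ (Real.sqrt_ne_zero'.mpr (by positivity))]

lemma tail_eq (y : ℝ) : 1 - stdNormalCDF y = ∫ t in Set.Ioi y, stdNormalPDF t := by
  have h := intervalIntegral.integral_Iic_add_Ioi (b := y) pdf_integrable.integrableOn pdf_integrable.integrableOn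
  rw [pdf_total] at h
  unfold stdNormalCDF
  linarith

lemma tail_upper {y : ℝ} (hy : 1 ≤ y) :
    ∫ t in Set.Ioi y, stdNormalPDF t ≤ (Real.sqrt (2 * π))⁻¹ * Real.exp (-y ^ 2 / 2) := by
  set c : ℝ := (Real.sqrt (2 * π))⁻¹ with hc
  have hcpos : 0 < c := by rw [hc]; positivity
  have hint : IntegrableOn (fun t : ℝ => c * Real.exp (y - y ^ 2 / 2) * Real.exp (-t))
      (Set.Ioi y) := by
    have := (exp_neg_integrableOn_Ioi y (b := 1) one_pos)
    simpa [IntegrableOn] using this.const_mul (c * Real.exp (y - y ^ 2 / 2))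
  have h1 : ∫ t in Set.Ioi y, stdNormalPDF t
      ≤ ∫ t in Set.Ioi y, c * Real.exp (y - y ^ 2 / 2) * Real.exp (-t) := by
    apply setIntegral_mono_on pdf_integrable.integrableOn hint measurableSet_Ioi
    intro t ht
    rw [Set.mem_Ioi] at ht
    unfold stdNormalPDF
    rw [mul_assoc, ← Real.exp_add]
    apply mul_le_mul_of_nonneg_left _ (le_of_lt hcpos)
    apply Real.exp_le_exp.mpr
    nlinarith [mul_nonneg (sub_nonneg.mpr ht.le) (by linarith : (0:ℝ) ≤ t + y - 2)]
  have h2 : ∫ t in Set.Ioi y, c * Real.exp (y - y ^ 2 / 2) * Real.exp (-t)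
      = c * Real.exp (-y ^ 2 / 2) := by
    rw [MeasureTheory.integral_const_mul, integral_exp_neg_Ioi, mul_assoc, ← Real.exp_add]
    ring_nf
  linarith

lemma tail_lower {y : ℝ} (hy : 0 ≤ y) :
    (Real.sqrt (2 * π))⁻¹ * Real.exp (-(y + 1) ^ 2 / 2) ≤ ∫ t in Set.Ioi y, stdNormalPDF t := by
  set c : ℝ := (Real.sqrt (2 * π))⁻¹ with hc
  have hcpos : 0 < c := by rw [hc]; positivity
  have h1 : ∫ t in Set.Ioc y (y + 1), c * Real.exp (-(y + 1) ^ 2 / 2)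
      ≤ ∫ t in Set.Ioc y (y + 1), stdNormalPDF t := by
    apply setIntegral_mono_on ((integrableOn_const_iff).mpr (Or.inr (by simp)))
      pdf_integrable.integrableOn measurableSet_Ioc
    intro t ht
    rw [Set.mem_Ioc] at ht
    unfold stdNormalPDF
    apply mul_le_mul_of_nonneg_left _ (le_of_lt hcpos)
    apply Real.exp_le_exp.mpr
    nlinarith [mul_nonneg (sub_nonneg.mpr ht.2) (by linarith : (0:ℝ) ≤ y + 1 + t)]
  have h2 : ∫ t in Set.Ioc y (y + 1), stdNormalPDF t ≤ ∫ t in Set.Ioi y, stdNormalPDF t := by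
    apply setIntegral_mono_set pdf_integrable.integrableOn
    · refine ae_of_all _ fun t => ?_
      unfold stdNormalPDF; positivity
    · exact (Set.Ioc_subset_Ioi_self).eventuallyLE
  have h3 : ∫ t in Set.Ioc y (y + 1), c * Real.exp (-(y + 1) ^ 2 / 2)
      = c * Real.exp (-(y + 1) ^ 2 / 2) := by
    rw [setIntegral_const, Real.volume_real_Ioc]
    simp
  linarith

lemma tail_pos {y : ℝ} (hy : 0 ≤ y) : 0 < 1 - stdNormalCDF y := by
  rw [tail_eq]
  calc (0:ℝ) < (Real.sqrt (2 * π))⁻¹ * Real.exp (-(y + 1) ^ 2 / 2) := by positivity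
    _ ≤ _ := tail_lower hy

lemma key : Tendsto (fun y => -Real.log (1 - stdNormalCDF y) / (y ^ 2 / 2)) atTop (nhds 1) := by
  set L : ℝ := Real.log (Real.sqrt (2 * π)) with hL
  have hlogc : Real.log ((Real.sqrt (2 * π))⁻¹) = -L := by rw [Real.log_inv]
  have hlo : Tendsto (fun y : ℝ => (y ^ 2 / 2 + L) / (y ^ 2 / 2)) atTop (nhds 1) := by
    have h0 : Tendsto (fun y : ℝ => L / (y ^ 2 / 2)) atTop (nhds 0) :=
      tendsto_const_nhds.div_atTop ((tendsto_pow_atTop two_ne_zero).atTop_div_const two_pos)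
    have := tendsto_const_nhds.add h0 (f := fun _ : ℝ => (1:ℝ))
    rw [add_zero] at this
    apply this.congr'
    filter_upwards [eventually_gt_atTop (0:ℝ)] with y hy
    field_simp
  have hhi : Tendsto (fun y : ℝ => ((y + 1) ^ 2 / 2 + L) / (y ^ 2 / 2)) atTop (nhds 1) := by
    have h1 : Tendsto (fun y : ℝ => 2 / y) atTop (nhds 0) :=
      tendsto_const_nhds.div_atTop tendsto_id
    have h2 : Tendsto (fun y : ℝ => (1 + 2 * L) / y ^ 2) atTop (nhds 0) :=
      tendsto_const_nhds.div_atTop (tendsto_pow_atTop two_ne_zero)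
    have := (tendsto_const_nhds.add h1 (f := fun _ : ℝ => (1:ℝ))).add h2
    rw [add_zero, add_zero] at this
    apply this.congr'
    filter_upwards [eventually_gt_atTop (0:ℝ)] with y hy
    field_simp
    ring
  apply tendsto_of_tendsto_of_tendsto_of_le_of_le' hlo hhi
  · filter_upwards [eventually_ge_atTop (1:ℝ)] with y hy
    have hub : Real.log (1 - stdNormalCDF y) ≤ -L + (-y ^ 2 / 2) := by
      calc Real.log (1 - stdNormalCDF y)
          ≤ Real.log ((Real.sqrt (2 * π))⁻¹ * Real.exp (-y ^ 2 / 2)) :=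
            Real.log_le_log (tail_pos (by linarith)) (by rw [tail_eq]; exact tail_upper hy)
        _ = -L + (-y ^ 2 / 2) := by
            rw [Real.log_mul (by positivity) (Real.exp_ne_zero _), hlogc, Real.log_exp]
    have hden : (0:ℝ) < y ^ 2 / 2 := by positivity
    exact div_le_div_of_nonneg_right (by linarith) hden.le
  · filter_upwards [eventually_ge_atTop (1:ℝ)] with y hy
    have hlb : -L + (-(y + 1) ^ 2 / 2) ≤ Real.log (1 - stdNormalCDF y) := by
      calc (-L + (-(y + 1) ^ 2 / 2))
          = Real.log ((Real.sqrt (2 * π))⁻¹ * Real.exp (-(y + 1) ^ 2 / 2)) := by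
            rw [Real.log_mul (by positivity) (Real.exp_ne_zero _), hlogc, Real.log_exp]
        _ ≤ Real.log (1 - stdNormalCDF y) := by
            apply Real.log_le_log (by positivity)
            rw [tail_eq]; exact tail_lower (by linarith)
    have hden : (0:ℝ) < y ^ 2 / 2 := by positivity
    exact div_le_div_of_nonneg_right (by linarith) hden.le

/-- If `f` is the CDF of `N(0, σ²)`, then `-σ² log(1 - f(x)) ~ x²/2` as `x → ∞`. -/
theorem stmt12 (σ : ℝ) (hσ : 0 < σ) (f : ℝ → ℝ) (hf : ∀ x, f x = stdNormalCDF (x / σ)) :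
    Tendsto (fun x => (-σ ^ 2 * Real.log (1 - f x)) / (x ^ 2 / 2)) atTop (nhds 1) := by
  have hcomp : Tendsto (fun x : ℝ => x / σ) atTop atTop :=
    tendsto_id.atTop_div_const hσ
  have := key.comp hcomp
  apply this.congr'
  filter_upwards [eventually_gt_atTop (0:ℝ)] with x hx
  rw [hf x]
  have hx0 : x ≠ 0 := ne_of_gt hx
  have hσ0 : σ ≠ 0 := ne_of_gt hσ
  simp only [Function.comp_apply]
  field_simp
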